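/- Setting all x_i = 1 in the forest generating identity: the number of rooted forests on vertex set {1,…,n} with root set S (a nonempty subset of {1,…,n} of size k, with n ≥ k) equals k · n^{n−k−1} when n > k, and equals 1 when n = k. -/

import Mathlib

open Finset

noncomputable section
open scoped Classical

/-- A rooted forest on vertex set `Fin n` with root set `S`, encoded by its
parent map `f`: roots are fixed points of `f`, and every vertex reaches a
root after iterating `f` at most `n` times (this forces acyclicity outside
the roots).  Edges of the forest are the pairs `(f v, v)` for `v ∉ S`,
oriented away from the roots. -/
def IsRootedForest (n : ℕ) (S : Finset (Fin n)) (f : Fin n → Fin n) : Prop :=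
  (∀ v ∈ S, f v = v) ∧ ∀ v : Fin n, ∃ k ≤ n, f^[k] v ∈ S

/-- The number of successors (children) of the vertex `i` in the rooted
forest encoded by `f` with root set `S`. -/
def forestDeg (n : ℕ) (S : Finset (Fin n)) (f : Fin n → Fin n) (i : Fin n) : ℕ :=
  (Finset.univ.filter fun v => v ∉ S ∧ f v = i).card

namespace ForestProof

variable {n : ℕ}

/-- iterating a point of period `d`. -/
lemma iterate_mod {α : Type*} {g : α → α} {x : α} {d : ℕ} (hd : 0 < d)
    (hx : g^[d] x = x) (s : ℕ) : g^[s] x = g^[s % d] x := by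
  conv_lhs => rw [← Nat.mod_add_div s d, Function.iterate_add_apply]
  congr 1
  rw [Function.iterate_mul]
  exact Function.iterate_fixed hx _

/-- pigeonhole: some iterate is periodic. -/
lemma exists_periodic_iterate (g : Fin n → Fin n) (x : Fin n) :
    ∃ i m, 0 < m ∧ g^[m] (g^[i] x) = g^[i] x := by
  obtain ⟨a, b, hab, he⟩ := Finite.exists_ne_map_eq_of_infinite fun i : ℕ => g^[i] x
  rcases hab.lt_or_gt with h | h
  · exact ⟨a, b - a, by omega, by
      rw [← Function.iterate_add_apply]
      rw [show b - a + a = b by omega, he]⟩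
  · exact ⟨b, a - b, by omega, by
      rw [← Function.iterate_add_apply]
      rw [show a - b + b = a by omega, ← he]⟩

/-- if the orbit ever reaches `T`, it does so within `n` steps. -/
lemma reach_bound {g : Fin n → Fin n} {T : Finset (Fin n)} {x : Fin n}
    (h : ∃ j, g^[j] x ∈ T) : ∃ j ≤ n, g^[j] x ∈ T := by
  classical
  set j₀ := Nat.find h with hj₀
  have hspec : g^[j₀] x ∈ T := Nat.find_spec h
  have hmin : ∀ i < j₀, g^[i] x ∉ T := fun i hi => Nat.find_min h hi
  refine ⟨j₀, ?_, hspec⟩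
  by_contra hn
  push_neg at hn
  have claim : ∀ a b : ℕ, a < b → b < j₀ → g^[a] x ≠ g^[b] x := by
    intro a b hab hb he
    have hd : 0 < b - a := by omega
    have he2 : g^[b - a] (g^[a] x) = g^[a] x := by
      rw [← Function.iterate_add_apply, show b - a + a = b by omega]
      exact he.symm
    have hper : g^[j₀] x = g^[(j₀ - a) % (b - a) + a] x := by
      rw [Function.iterate_add_apply, ← iterate_mod hd he2 (j₀ - a),
        ← Function.iterate_add_apply, show j₀ - a + a = j₀ by omega]
    have hlt2 : (j₀ - a) % (b - a) + a < j₀ := by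
      have := Nat.mod_lt (j₀ - a) (y := b - a) (by omega)
      omega
    exact hmin _ hlt2 (hper ▸ hspec)
  have hinj : Function.Injective fun i : Fin j₀ => g^[(i : ℕ)] x := by
    intro a b he
    by_contra hne
    have hne' : (a : ℕ) ≠ (b : ℕ) := fun hc => hne (Fin.ext hc)
    rcases hne'.lt_or_gt with hlt | hlt
    · exact claim _ _ hlt b.2 he
    · exact claim _ _ hlt a.2 he.symm
  have := Fintype.card_le_of_injective _ hinj
  simp [Fintype.card_fin] at this
  omega

/-- once in `S` (pointwise fixed), stays there with the same value. -/
lemma absorb {S : Finset (Fin n)} {g : Fin n → Fin n} (hg : ∀ v ∈ S, g v = v)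
    {x : Fin n} {a b : ℕ} (hab : a ≤ b) (ha : g^[a] x ∈ S) :
    g^[b] x = g^[a] x := by
  induction b, hab using Nat.le_induction with
  | base => rfl
  | succ b hb ih =>
      rw [Function.iterate_succ_apply', ih]
      exact hg _ ha

lemma periodic_mem_of_reach {S : Finset (Fin n)} {g : Fin n → Fin n}
    (hg : ∀ v ∈ S, g v = v) {c : Fin n} (hreach : ∃ j, g^[j] c ∈ S)
    {m : ℕ} (hm : 0 < m) (hc : g^[m] c = c) : c ∈ S := by
  obtain ⟨j, hj⟩ := hreach
  have h1 : g^[m * j] c = c := by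
    rw [Function.iterate_mul]; exact Function.iterate_fixed hc j
  have h2 : g^[m * j] c = g^[j] c := absorb hg (Nat.le_mul_of_pos_left j hm) hj
  rw [h1] at h2
  rw [h2]; exact hj

/-- orbits of two functions agreeing off `T` agree until first entering `T`. -/
lemma orbit_agree {g₁ g₂ : Fin n → Fin n} {T : Finset (Fin n)}
    (hagree : ∀ w, w ∉ T → g₁ w = g₂ w) (x : Fin n) {j : ℕ}
    (hj : ∀ i < j, g₁^[i] x ∉ T) : g₁^[j] x = g₂^[j] x := by
  induction j with
  | zero => rfl
  | succ j ih =>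
      have h1 : g₁^[j] x = g₂^[j] x := ih fun i hi => hj i (by omega)
      rw [Function.iterate_succ_apply', Function.iterate_succ_apply', ← h1,
        hagree _ (hj j (by omega))]

/-- every point of a finite set mapped bijectively into itself is periodic. -/
lemma periodic_of_mapsTo_injOn {g : Fin n → Fin n} {P : Finset (Fin n)}
    (hmap : ∀ w ∈ P, g w ∈ P) (hinj : Set.InjOn g ↑P) {w : Fin n} (hw : w ∈ P) :
    ∃ m, 0 < m ∧ g^[m] w = w := by
  have hiter : ∀ i, g^[i] w ∈ P := by
    intro i; induction i with
    | zero => exact hw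
    | succ i ih => rw [Function.iterate_succ_apply']; exact hmap _ ih
  obtain ⟨i, m, hm, hper⟩ := exists_periodic_iterate g w
  refine ⟨m, hm, ?_⟩
  -- peel off i applications using injectivity on P
  have key : ∀ a, g^[m] (g^[a] w) = g^[a] w → g^[m] w = w := by
    intro a
    induction a with
    | zero => exact fun h => h
    | succ a ih =>
        intro h
        apply ih
        rw [Function.iterate_succ_apply'] at h
        rw [← Function.iterate_succ_apply] at h
        rw [Function.iterate_succ_apply'] at h
        have hmem : g^[m] (g^[a] w) ∈ P := by
          rw [← Function.iterate_add_apply]; exact hiter _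
        exact hinj hmem (hiter a) h
  exact key i hper

lemma list_toFinset_map {α β : Type*} [DecidableEq α] [DecidableEq β]
    (l : List α) (φ : α → β) : (l.map φ).toFinset = l.toFinset.image φ := by
  ext b; simp

lemma iterate_mem {g : Fin n → Fin n} {P : Finset (Fin n)}
    (hmap : ∀ w ∈ P, g w ∈ P) {w : Fin n} (hw : w ∈ P) (s : ℕ) : g^[s] w ∈ P := by
  induction s with
  | zero => exact hw
  | succ s ih => rw [Function.iterate_succ_apply']; exact hmap _ ih

/-! ### Definitions of the bijection -/

def hitT (S : Finset (Fin n)) (g : Fin n → Fin n) (x : Fin n) : ℕ :=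
  if h : ∃ j, g^[j] x ∈ S then Nat.find h else 0

def pList (S : Finset (Fin n)) (f : Fin n → Fin n) (v : Fin n) : List (Fin n) :=
  (List.range (hitT S f v)).map (fun i => f^[i] v)

def fwdFun (S : Finset (Fin n)) (f : Fin n → Fin n) (v : Fin n) : Fin n → Fin n :=
  fun w =>
    if w ∈ (pList S f v).toFinset then
      (pList S f v).getD (((pList S f v).toFinset.sort (· ≤ ·)).idxOf w) w
    else f w

def fwdRoot (S : Finset (Fin n)) (f : Fin n → Fin n) (v : Fin n) : Fin n :=
  f^[hitT S f v] v

def cycC (S : Finset (Fin n)) (h : Fin n → Fin n) : Finset (Fin n) :=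
  univ.filter fun c => c ∉ S ∧ ∃ m, 0 < m ∧ h^[m] c = c

def qList (S : Finset (Fin n)) (h : Fin n → Fin n) : List (Fin n) :=
  ((cycC S h).sort (· ≤ ·)).map h

def bwdFun (S : Finset (Fin n)) (h : Fin n → Fin n) (r : Fin n) : Fin n → Fin n :=
  fun w =>
    if w ∈ cycC S h then (qList S h ++ [r]).getD ((qList S h).idxOf w + 1) r
    else h w

def bwdV (S : Finset (Fin n)) (h : Fin n → Fin n) (r : Fin n) : Fin n :=
  (qList S h ++ [r]).getD 0 r

/-! ### Forward side: from a forest to a function fixing S -/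

section Forward

variable {S : Finset (Fin n)} {f : Fin n → Fin n} (hf : IsRootedForest n S f) (v : Fin n)

include hf

lemma hit_exists (x : Fin n) : ∃ j, f^[j] x ∈ S := by
  obtain ⟨j, _, hj⟩ := hf.2 x; exact ⟨j, hj⟩

lemma hitT_spec : f^[hitT S f v] v ∈ S := by
  rw [hitT, dif_pos (hit_exists hf v)]
  exact Nat.find_spec (hit_exists hf v)

lemma hitT_min {i : ℕ} (hi : i < hitT S f v) : f^[i] v ∉ S := by
  rw [hitT, dif_pos (hit_exists hf v)] at hi
  exact Nat.find_min (hit_exists hf v) hi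

omit hf in lemma pList_length : (pList S f v).length = hitT S f v := by
  simp [pList]

omit hf in lemma pList_getElem {i : ℕ} (hi : i < (pList S f v).length) :
    (pList S f v)[i] = f^[i] v := by
  simp [pList]

omit hf in lemma mem_pList {w : Fin n} :
    w ∈ pList S f v ↔ ∃ i < hitT S f v, f^[i] v = w := by
  simp [pList, List.mem_map, eq_comm]

lemma pList_nodup : (pList S f v).Nodup := by
  have claim : ∀ a b : ℕ, a < b → b < hitT S f v → f^[a] v = f^[b] v → False := by
    intro a b hab hb he
    have he2 : f^[b - a] (f^[a] v) = f^[a] v := by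
      rw [← Function.iterate_add_apply, show b - a + a = b by omega]
      exact he.symm
    have : f^[a] v ∈ S :=
      periodic_mem_of_reach hf.1 (hit_exists hf _) (by omega) he2
    exact hitT_min hf v (by omega) this
  refine List.Nodup.map_on ?_ List.nodup_range
  intro a ha b hb he
  rw [List.mem_range] at ha hb
  by_contra hne
  rcases Nat.lt_or_ge a b with h | h
  · exact claim a b h hb he
  · exact claim b a (by omega) ha he.symm

lemma pList_not_mem_S {w : Fin n} (hw : w ∈ pList S f v) : w ∉ S := by
  rw [mem_pList] at hw
  obtain ⟨i, hi, rfl⟩ := hw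
  exact hitT_min hf v hi

lemma pList_toFinset_card : (pList S f v).toFinset.card = hitT S f v := by
  rw [List.toFinset_card_of_nodup (pList_nodup hf v), pList_length]

lemma fwdFun_fixes : ∀ w ∈ S, fwdFun S f v w = w := by
  intro w hw
  rw [fwdFun]
  rw [if_neg (fun hc => pList_not_mem_S hf v (List.mem_toFinset.mp hc) hw)]
  exact hf.1 w hw

lemma fwdRoot_mem : fwdRoot S f v ∈ S := hitT_spec hf v

/-- the key structural fact: `fwdFun` maps the sorted enumeration of `P`
to the path list. -/
lemma fwdFun_map_sort :
    ((pList S f v).toFinset.sort (· ≤ ·)).map (fwdFun S f v) = pList S f v := by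
  apply List.ext_getElem
  · simp [Finset.length_sort, pList_toFinset_card hf v, pList_length]
  · intro i h1 h2
    simp only [List.getElem_map]
    set L := (pList S f v).toFinset.sort (· ≤ ·) with hL
    have hilt : i < L.length := by simpa using h1
    have hmem : L[i]'hilt ∈ (pList S f v).toFinset := by
      rw [← Finset.mem_sort (α := Fin n) (· ≤ ·)]
      exact List.getElem_mem _
    simp only [fwdFun]
    rw [if_pos hmem]
    rw [List.Nodup.idxOf_getElem (Finset.sort_nodup _ _) i hilt]
    rw [List.getD_eq_getElem _ _ h2]

lemma fwdFun_image :
    (pList S f v).toFinset.image (fwdFun S f v) = (pList S f v).toFinset := by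
  conv_lhs => rw [← Finset.sort_toFinset (pList S f v).toFinset (· ≤ ·)]
  rw [← list_toFinset_map]
  rw [fwdFun_map_sort hf v]

lemma fwdFun_injOn : Set.InjOn (fwdFun S f v) ↑(pList S f v).toFinset :=
  Finset.injOn_of_card_image_eq (by rw [fwdFun_image hf v])

end Forward

/-! ### Backward side -/

section Backward

variable {S : Finset (Fin n)} {h : Fin n → Fin n} (hh : ∀ v ∈ S, h v = v)
  {r : Fin n} (hr : r ∈ S)

omit hh hr in
lemma mem_cycC {c : Fin n} :
    c ∈ cycC S h ↔ c ∉ S ∧ ∃ m, 0 < m ∧ h^[m] c = c := by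
  simp [cycC]

include hh in
lemma cycC_maps {c : Fin n} (hc : c ∈ cycC S h) : h c ∈ cycC S h := by
  rw [mem_cycC] at hc ⊢
  obtain ⟨hcS, m, hm, hper⟩ := hc
  constructor
  · intro hS
    have h1 : h^[m] c = h^[1] c := absorb hh hm (by simpa using hS)
    rw [hper] at h1
    exact hcS (h1 ▸ (by simpa using hS))
  · refine ⟨m, hm, ?_⟩
    rw [← Function.iterate_succ_apply, Function.iterate_succ_apply', hper]

omit hh hr in
lemma cycC_injOn : Set.InjOn h ↑(cycC S h) := by
  intro c hc c' hc' he
  rw [Finset.mem_coe, mem_cycC] at hc hc'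
  obtain ⟨-, m, hm, hper⟩ := hc
  obtain ⟨-, m', hm', hper'⟩ := hc'
  have hM : 0 < m * m' := Nat.mul_pos hm hm'
  have h1 : h^[m * m'] c = c := by
    rw [Function.iterate_mul]; exact Function.iterate_fixed hper m'
  have h2 : h^[m * m'] c' = c' := by
    rw [mul_comm, Function.iterate_mul]; exact Function.iterate_fixed hper' m
  have h3 : h^[m * m' - 1 + 1] c = h^[m * m' - 1 + 1] c' := by
    rw [Function.iterate_succ_apply, Function.iterate_succ_apply, he]
  rw [show m * m' - 1 + 1 = m * m' by omega, h1, h2] at h3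
  exact h3

include hh in
lemma cycC_image : (cycC S h).image h = cycC S h := by
  apply Finset.eq_of_subset_of_card_le
  · rw [Finset.image_subset_iff]
    intro c hc; exact cycC_maps hh hc
  · rw [Finset.card_image_of_injOn cycC_injOn]

include hh in
lemma qList_toFinset : (qList S h).toFinset = cycC S h := by
  rw [qList, list_toFinset_map, Finset.sort_toFinset, cycC_image hh]

omit hh hr in
lemma qList_nodup : (qList S h).Nodup := by
  refine List.Nodup.map_on ?_ (Finset.sort_nodup _ _)
  intro x hx y hy he
  rw [Finset.mem_sort] at hx hy
  exact cycC_injOn hx hy he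

omit hh hr in
lemma qList_length : (qList S h).length = (cycC S h).card := by
  simp [qList, Finset.length_sort]

omit hh hr in
lemma reach_SC (x : Fin n) : ∃ j, h^[j] x ∈ S ∪ cycC S h := by
  obtain ⟨i, m, hm, hper⟩ := exists_periodic_iterate h x
  refine ⟨i, ?_⟩
  rw [Finset.mem_union]
  by_cases hS : h^[i] x ∈ S
  · exact Or.inl hS
  ·exact Or.inr (by rw [mem_cycC]; exact ⟨hS, m, hm, hper⟩)

-- helper about getD on `q ++ [r]`
omit hh hr in
lemma ext_getD_lt {l : List (Fin n)} {a d : Fin n} {i : ℕ} (hi : i < l.length) :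
    (l ++ [a]).getD i d = l[i] := by
  rw [List.getD_append _ _ _ _ hi, List.getD_eq_getElem _ _ hi]

omit hh hr in
lemma ext_getD_last {l : List (Fin n)} {a d : Fin n} :
    (l ++ [a]).getD l.length d = a := by
  rw [List.getD_eq_getElem _ _ (by simp)]
  exact List.getElem_concat_length rfl _

include hh hr in
lemma bwd_walk : ∀ dm (w : Fin n), w ∈ cycC S h →
    (qList S h).idxOf w + dm = (qList S h).length →
    ∃ d, (bwdFun S h r)^[d] w ∈ S := by
  intro dm
  induction dm with
  | zero =>
      intro w hw hlen
      have : (qList S h).idxOf w < (qList S h).length :=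
        List.idxOf_lt_length_iff.mpr (by rw [← List.mem_toFinset, qList_toFinset hh]; exact hw)
      omega
  | succ dm ih =>
      intro w hw hlen
      have hfw : bwdFun S h r w = (qList S h ++ [r]).getD ((qList S h).idxOf w + 1) r := by
        rw [bwdFun, if_pos hw]
      by_cases hd : dm = 0
      · subst hd
        refine ⟨1, ?_⟩
        simp only [Function.iterate_one, hfw]
        rw [show (qList S h).idxOf w + 1 = (qList S h).length by omega, ext_getD_last]
        exact hr
      · have hlt : (qList S h).idxOf w + 1 < (qList S h).length := by omega
        have hnext : bwdFun S h r w = (qList S h)[(qList S h).idxOf w + 1] := by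
          rw [hfw, ext_getD_lt hlt]
        have hmem : (qList S h)[(qList S h).idxOf w + 1] ∈ cycC S h := by
          rw [← qList_toFinset hh, List.mem_toFinset]
          exact List.getElem_mem _
        have hidx : (qList S h).idxOf ((qList S h)[(qList S h).idxOf w + 1]) =
            (qList S h).idxOf w + 1 :=
          List.Nodup.idxOf_getElem qList_nodup _ _
        obtain ⟨d, hd'⟩ := ih _ hmem (by omega)
        refine ⟨d + 1, ?_⟩
        rw [Function.iterate_add_apply, Function.iterate_one, hnext]
        rw [← hnext] at hd' ⊢
        exact hd'

include hh in
lemma bwdFun_fixes : ∀ w ∈ S, bwdFun S h r w = w := by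
  intro w hw
  rw [bwdFun, if_neg (fun hc => ((mem_cycC).mp hc).1 hw)]
  exact hh w hw

include hh hr in
lemma bwd_forest : IsRootedForest n S (bwdFun S h r) := by
  refine ⟨bwdFun_fixes hh, ?_⟩
  intro x
  have hagree : ∀ w, w ∉ cycC S h → h w = bwdFun S h r w := by
    intro w hw; rw [bwdFun, if_neg hw]
  -- first hit of S ∪ cycC under h
  have hex : ∃ j, h^[j] x ∈ S ∪ cycC S h := reach_SC x
  set j₀ := Nat.find hex with hj₀
  have hspec : h^[j₀] x ∈ S ∪ cycC S h := Nat.find_spec hex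
  have hmin : ∀ i < j₀, h^[i] x ∉ S ∪ cycC S h := fun i hi => Nat.find_min hex hi
  have hagreeiter : h^[j₀] x = (bwdFun S h r)^[j₀] x :=
    orbit_agree hagree x (fun i hi => fun hc => hmin i hi (Finset.mem_union_right _ hc))
  have hreach : ∃ j, (bwdFun S h r)^[j] x ∈ S := by
    rw [Finset.mem_union] at hspec
    rcases hspec with hS | hC
    · exact ⟨j₀, by rw [← hagreeiter]; exact hS⟩
    · obtain ⟨d, hd⟩ := bwd_walk hh hr ((qList S h).length - (qList S h).idxOf (h^[j₀] x))
        _ hC (by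
          have : (qList S h).idxOf (h^[j₀] x) < (qList S h).length :=
            List.idxOf_lt_length_iff.mpr
              (by rw [← List.mem_toFinset, qList_toFinset hh]; exact hC)
          omega)
      refine ⟨d + j₀, ?_⟩
      rw [Function.iterate_add_apply, ← hagreeiter]
      exact hd
  obtain ⟨j, hj, hjS⟩ := reach_bound hreach
  exact ⟨j, hj, hjS⟩

include hh hr in
lemma bwd_iter : ∀ i ≤ (qList S h).length,
    (bwdFun S h r)^[i] (bwdV S h r) = (qList S h ++ [r]).getD i r := by
  intro i
  induction i with
  | zero => intro _; rfl
  | succ i ih =>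
      intro hi
      have hilt : i < (qList S h).length := by omega
      rw [Function.iterate_succ_apply', ih (by omega), ext_getD_lt hilt]
      have hmem : (qList S h)[i] ∈ cycC S h := by
        rw [← qList_toFinset hh, List.mem_toFinset]; exact List.getElem_mem _
      rw [bwdFun, if_pos hmem, List.Nodup.idxOf_getElem qList_nodup _ _]

include hh hr in
lemma bwd_hitT : hitT S (bwdFun S h r) (bwdV S h r) = (qList S h).length := by
  have hS : (bwdFun S h r)^[(qList S h).length] (bwdV S h r) ∈ S := by
    rw [bwd_iter hh hr _ le_rfl, ext_getD_last]; exact hr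
  have hnot : ∀ i < (qList S h).length, (bwdFun S h r)^[i] (bwdV S h r) ∉ S := by
    intro i hi
    rw [bwd_iter hh hr _ (le_of_lt hi), ext_getD_lt hi]
    have hmem : (qList S h)[i] ∈ cycC S h := by
      rw [← qList_toFinset hh, List.mem_toFinset]; exact List.getElem_mem _
    exact ((mem_cycC).mp hmem).1
  have hex : ∃ j, (bwdFun S h r)^[j] (bwdV S h r) ∈ S := ⟨_, hS⟩
  rw [hitT, dif_pos hex]
  rw [Nat.find_eq_iff hex]
  exact ⟨hS, fun i hi => hnot i hi⟩

include hh hr in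
lemma bwd_pList : pList S (bwdFun S h r) (bwdV S h r) = qList S h := by
  apply List.ext_getElem
  · rw [pList_length, bwd_hitT hh hr]
  · intro i h1 h2
    rw [pList_getElem _ h1, bwd_iter hh hr i (le_of_lt h2), ext_getD_lt h2]

include hh hr in
lemma bwd_fwdFun : fwdFun S (bwdFun S h r) (bwdV S h r) = h := by
  funext w
  have hPC : (pList S (bwdFun S h r) (bwdV S h r)).toFinset = cycC S h := by
    rw [bwd_pList hh hr, qList_toFinset hh]
  by_cases hw : w ∈ cycC S h
  · rw [fwdFun, if_pos (by rw [hPC]; exact hw)]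
    rw [bwd_pList hh hr, qList_toFinset hh]
    set L := (cycC S h).sort (· ≤ ·) with hL
    have hwL : w ∈ L := by rw [hL, Finset.mem_sort]; exact hw
    have hidx : L.idxOf w < L.length := List.idxOf_lt_length_iff.mpr hwL
    have hql : L.idxOf w < (qList S h).length := by
      rwa [qList_length, ← Finset.length_sort (α := Fin n) (· ≤ ·)]
    rw [List.getD_eq_getElem _ _ hql]
    show (L.map h)[L.idxOf w]'(by simpa using hidx) = h w
    rw [List.getElem_map]
    congr 1
    exact List.getElem_idxOf hidx
  · rw [fwdFun, if_neg (by rw [hPC]; exact hw), bwdFun, if_neg hw]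

include hh hr in
lemma bwd_fwdRoot : fwdRoot S (bwdFun S h r) (bwdV S h r) = r := by
  rw [fwdRoot, bwd_hitT hh hr, bwd_iter hh hr _ le_rfl, ext_getD_last]

end Backward

/-! ### Roundtrip: forward then backward -/

section Roundtrip1

variable {S : Finset (Fin n)} {f : Fin n → Fin n} (hf : IsRootedForest n S f) (v : Fin n)

include hf

lemma fwd_cycC : cycC S (fwdFun S f v) = (pList S f v).toFinset := by
  apply Finset.Subset.antisymm
  · intro c hc
    rw [mem_cycC] at hc
    obtain ⟨hcS, m, hm, hper⟩ := hc
    by_contra hcP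
    set φ := fwdFun S f v with hφ
    have hagree : ∀ w, w ∉ (pList S f v).toFinset → φ w = f w := by
      intro w hw; rw [hφ, fwdFun, if_neg hw]
    have hmap : ∀ x ∈ (pList S f v).toFinset, φ x ∈ (pList S f v).toFinset := by
      intro x hx
      rw [← fwdFun_image hf v]; exact Finset.mem_image_of_mem _ hx
    by_cases hP : ∃ j, φ^[j] c ∈ (pList S f v).toFinset
    · obtain ⟨j, hj⟩ := hP
      have hj0 : j ≠ 0 := by rintro rfl; exact hcP hj
      have h1 : φ^[m * j] c = c := by
        rw [Function.iterate_mul]; exact Function.iterate_fixed hper j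
      have h2 : φ^[m * j] c ∈ (pList S f v).toFinset := by
        rw [show m * j = (m * j - j) + j by
              have := Nat.le_mul_of_pos_left j hm; omega,
          Function.iterate_add_apply]
        exact iterate_mem hmap hj _
      rw [h1] at h2; exact hcP h2
    · push_neg at hP
      have hiter : ∀ j, φ^[j] c = f^[j] c := fun j =>
        orbit_agree hagree c (fun i _ => hP i)
      have hreach : ∃ j, φ^[j] c ∈ S := by
        obtain ⟨j, hj⟩ := hit_exists hf c
        exact ⟨j, by rw [hiter j]; exact hj⟩
      exact hcS (periodic_mem_of_reach (fwdFun_fixes hf v) hreach hm hper)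
  · intro w hw
    rw [mem_cycC]
    have hmap : ∀ x ∈ (pList S f v).toFinset, fwdFun S f v x ∈ (pList S f v).toFinset := by
      intro x hx
      rw [← fwdFun_image hf v]; exact Finset.mem_image_of_mem _ hx
    exact ⟨pList_not_mem_S hf v (List.mem_toFinset.mp hw),
      periodic_of_mapsTo_injOn hmap (fwdFun_injOn hf v) hw⟩

lemma fwd_qList : qList S (fwdFun S f v) = pList S f v := by
  rw [qList, fwd_cycC hf v, fwdFun_map_sort hf v]

lemma fwd_bwdFun : bwdFun S (fwdFun S f v) (fwdRoot S f v) = f := by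
  funext w
  by_cases hw : w ∈ (pList S f v).toFinset
  · rw [bwdFun, if_pos (by rw [fwd_cycC hf v]; exact hw), fwd_qList hf v]
    have hwl : w ∈ pList S f v := List.mem_toFinset.mp hw
    set i := (pList S f v).idxOf w with hi
    have hilt : i < (pList S f v).length := List.idxOf_lt_length_iff.mpr hwl
    have hwi : w = f^[i] v := by
      conv_lhs => rw [← List.getElem_idxOf hilt]
      rw [pList_getElem _ (by exact hilt)]
    have hfw : f w = f^[i + 1] v := by
      rw [hwi]; exact (Function.iterate_succ_apply' f i v).symm
    rcases Nat.lt_or_ge (i + 1) ((pList S f v).length) with hlt | hge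
    · rw [ext_getD_lt hlt, pList_getElem _ hlt, hfw]
    · have heq : i + 1 = (pList S f v).length := by omega
      rw [heq, ext_getD_last, hfw, fwdRoot, ← pList_length (f := f) (v := v), heq]
  · rw [bwdFun, if_neg (by rw [fwd_cycC hf v]; exact hw), fwdFun, if_neg hw]

lemma fwd_bwdV : bwdV S (fwdFun S f v) (fwdRoot S f v) = v := by
  rw [bwdV, fwd_qList hf v]
  rcases Nat.eq_zero_or_pos ((pList S f v).length) with h0 | hpos
  · have hnil : pList S f v = [] := List.length_eq_zero_iff.mp h0
    rw [hnil]
    show ([] ++ [fwdRoot S f v] : List (Fin n)).getD 0 (fwdRoot S f v) = v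
    have : ([] : List (Fin n)).length = 0 := rfl
    rw [← this, ext_getD_last, fwdRoot, ← pList_length (f := f) (v := v), h0]
    rfl
  · rw [ext_getD_lt hpos, pList_getElem _ hpos]
    rfl

end Roundtrip1

/-! ### The bijection and counting -/

def mainEquiv (S : Finset (Fin n)) :
    ({f : Fin n → Fin n // IsRootedForest n S f} × Fin n) ≃
      ({h : Fin n → Fin n // ∀ v ∈ S, h v = v} × {r : Fin n // r ∈ S}) where
  toFun x := ⟨⟨fwdFun S x.1.1 x.2, fwdFun_fixes x.1.2 x.2⟩,
    ⟨fwdRoot S x.1.1 x.2, fwdRoot_mem x.1.2 x.2⟩⟩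
  invFun y := ⟨⟨bwdFun S y.1.1 y.2.1, bwd_forest y.1.2 y.2.2⟩, bwdV S y.1.1 y.2.1⟩
  left_inv := by
    rintro ⟨⟨f, hf⟩, v⟩
    simp only [Prod.mk.injEq, Subtype.mk.injEq]
    exact ⟨fwd_bwdFun hf v, fwd_bwdV hf v⟩
  right_inv := by
    rintro ⟨⟨h, hh⟩, ⟨r, hr⟩⟩
    simp only [Prod.mk.injEq, Subtype.mk.injEq]
    exact ⟨bwd_fwdFun hh hr, bwd_fwdRoot hh hr⟩

def fixEquiv (S : Finset (Fin n)) :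
    {h : Fin n → Fin n // ∀ v ∈ S, h v = v} ≃ ((Sᶜ : Finset (Fin n)) → Fin n) where
  toFun h w := h.1 w.1
  invFun g := ⟨fun w => if hw : w ∈ Sᶜ then g ⟨w, hw⟩ else w, by
    intro v hv
    exact dif_neg (by simp [hv])⟩
  left_inv h := Subtype.ext (funext fun w => by
    by_cases hw : w ∈ Sᶜ
    · exact dif_pos hw
    · exact (dif_neg hw).trans (h.2 w (by simpa using hw)).symm)
  right_inv g := funext fun w => by
    have : (w : Fin n) ∈ Sᶜ := w.2
    simp [this]

lemma key (S : Finset (Fin n)) :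
    (univ.filter (IsRootedForest n S)).card * n = n ^ (Sᶜ.card) * S.card := by
  have h1 : (univ.filter (IsRootedForest n S)).card * n
      = Fintype.card ({f : Fin n → Fin n // IsRootedForest n S f} × Fin n) := by
    rw [Fintype.card_prod, Fintype.card_subtype, Fintype.card_fin]
  have h2 : Fintype.card ({h : Fin n → Fin n // ∀ v ∈ S, h v = v} × {r : Fin n // r ∈ S})
      = n ^ (Sᶜ.card) * S.card := by
    rw [Fintype.card_prod]
    congr 1
    · rw [Fintype.card_congr (fixEquiv S), Fintype.card_fun, Fintype.card_fin,
        Fintype.card_coe]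
    · exact Fintype.card_coe S
  rw [h1, Fintype.card_congr (mainEquiv S), h2]

end ForestProof

/-- generalized Cayley formula: the number of rooted forests on
`{1,…,n}` with root set `S` of size `k` is `k · n^(n-k-1)` if `n > k`, and `1`
if `n = k`. -/
theorem forest_count (n k : ℕ) (S : Finset (Fin n)) (hcard : S.card = k)
    (hk : 1 ≤ k) (hkn : k ≤ n) :
    (Finset.univ.filter (IsRootedForest n S)).card
      = if n = k then 1 else k * n ^ (n - k - 1) := by
  by_cases hnk : n = k
  · rw [if_pos hnk]
    have hS : S = univ := by
      apply Finset.eq_univ_of_card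
      rw [hcard, Fintype.card_fin, hnk]
    have : univ.filter (IsRootedForest n S) = {fun x => x} := by
      ext f
      simp only [mem_filter, mem_univ, true_and, mem_singleton]
      constructor
      · intro hf
        funext x
        exact hf.1 x (by rw [hS]; exact mem_univ x)
      · rintro rfl
        exact ⟨fun v _ => rfl, fun v => ⟨0, Nat.zero_le n, by rw [hS]; exact mem_univ _⟩⟩
    rw [this, card_singleton]
  · rw [if_neg hnk]
    have hlt : k < n := by omega
    have hcompl : Sᶜ.card = n - k := by
      rw [Finset.card_compl, Fintype.card_fin, hcard]
    have hkey := ForestProof.key S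
    rw [hcompl, hcard] at hkey
    have hpow : n ^ (n - k) = n ^ (n - k - 1) * n := by
      rw [← pow_succ, show n - k - 1 + 1 = n - k by omega]
    rw [hpow] at hkey
    have : (univ.filter (IsRootedForest n S)).card * n = k * n ^ (n - k - 1) * n := by
      rw [hkey]; ring
    exact Nat.eq_of_mul_eq_mul_right (by omega) this
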